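/- Let p and q be prime numbers with q = p + 2 and p ≡ 3 (mod 4). Let L be a field equipped with a ℚ₂-algebra structure such that L has dimension 2 as a ℚ₂-vector space, and let α ∈ L satisfy α² = -1. Then there exist z, w ∈ L with α·w² + 1 - (p+q)z² + z⁴ = 0 if and only if p ≡ 7 (mod 8). -/

import Mathlib

section Toolkit

local notation "K" => Padic 2

lemma norm_le_iff_toZModPow (n : ℕ) (x : ℤ_[2]) :
    ‖x‖ ≤ (2:ℝ)^(-(n:ℤ)) ↔ PadicInt.toZModPow n x = 0 := by
  rw [show ((2:ℝ)) = ((2:ℕ):ℝ) by norm_num, PadicInt.norm_le_pow_iff_mem_span_pow,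
    ← PadicInt.ker_toZModPow, RingHom.mem_ker]

lemma unit_iff (x : ℤ_[2]) : ‖x‖ = 1 ↔ PadicInt.toZModPow 1 x ≠ 0 := by
  constructor
  · intro h h2
    rw [← norm_le_iff_toZModPow] at h2
    rw [h] at h2; norm_num at h2
  · intro h
    rcases lt_or_eq_of_le x.norm_le_one with h1 | h1
    · exfalso; apply h
      rw [← norm_le_iff_toZModPow]
      have := (PadicInt.norm_lt_pow_iff_norm_le_pow_sub_one x 0).mp (by simpa using h1)
      simpa using this
    · exact h1

private lemma zmod8 : ∀ S : ZMod (2^3), (ZMod.castHom (show 2^1 ∣ 2^3 by norm_num) (ZMod (2^1)) S ≠ 0) → S^2 - 1 = 0 := by decide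

private lemma zmod32a : ∀ S T : ZMod (2^5), (ZMod.castHom (show 2^1 ∣ 2^5 by norm_num) (ZMod (2^1)) S ≠ 0) →
    (S^2 - 4*T^2 - 1)^2 + 16*S^2*T^2 = 0 := by decide

private lemma zmod32b : ∀ S T : ZMod (2^5), (ZMod.castHom (show 2^1 ∣ 2^5 by norm_num) (ZMod (2^1)) T ≠ 0) →
    (4*S^2 - T^2 + 1)^2 + 16*S^2*T^2 = 0 := by decide

lemma cast_ne (n : ℕ) (h : 1 ≤ n) (x : ℤ_[2]) (hx : ‖x‖ = 1) :
    ZMod.castHom (show 2^1 ∣ 2^n by exact pow_dvd_pow 2 h) (ZMod (2^1)) (PadicInt.toZModPow n x) ≠ 0 := by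
  rw [ZMod.castHom_apply, PadicInt.cast_toZModPow 1 n h]
  exact (unit_iff x).mp hx

lemma Zodd_sq (A : ℤ_[2]) (h : ‖A‖ = 1) : ‖A^2 - 1‖ ≤ 1/8 := by
  have : ‖A^2-1‖ ≤ (2:ℝ)^(-(3:ℕ):ℤ) := by
    rw [norm_le_iff_toZModPow]
    have := zmod8 (PadicInt.toZModPow 3 A) (cast_ne 3 (by norm_num) A h)
    simpa [map_pow, map_sub, map_one] using this
  calc ‖A^2-1‖ ≤ (2:ℝ)^(-(3:ℕ):ℤ) := this
    _ = 1/8 := by norm_num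

lemma Zusq1 (A B : ℤ_[2]) (h : ‖A‖ = 1) : ‖(A^2 - 4*B^2 - 1)^2 + 16*A^2*B^2‖ ≤ 1/32 := by
  have : ‖(A^2 - 4*B^2 - 1)^2 + 16*A^2*B^2‖ ≤ (2:ℝ)^(-(5:ℕ):ℤ) := by
    rw [norm_le_iff_toZModPow]
    have := zmod32a (PadicInt.toZModPow 5 A) (PadicInt.toZModPow 5 B) (cast_ne 5 (by norm_num) A h)
    simpa [map_pow, map_sub, map_add, map_mul, map_one, map_ofNat] using this
  calc _ ≤ (2:ℝ)^(-(5:ℕ):ℤ) := this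
    _ = 1/32 := by norm_num

lemma Zusq2 (A B : ℤ_[2]) (h : ‖B‖ = 1) : ‖(4*A^2 - B^2 + 1)^2 + 16*A^2*B^2‖ ≤ 1/32 := by
  have : ‖(4*A^2 - B^2 + 1)^2 + 16*A^2*B^2‖ ≤ (2:ℝ)^(-(5:ℕ):ℤ) := by
    rw [norm_le_iff_toZModPow]
    have := zmod32b (PadicInt.toZModPow 5 A) (PadicInt.toZModPow 5 B) (cast_ne 5 (by norm_num) B h)
    simpa [map_pow, map_sub, map_add, map_mul, map_one, map_ofNat] using this
  calc _ ≤ (2:ℝ)^(-(5:ℕ):ℤ) := this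
    _ = 1/32 := by norm_num

end Toolkit

-- discreteness
lemma qdisc {x : ℚ_[2]} (h : ‖x‖ < 1) : ‖x‖ ≤ 1/2 := by
  rcases eq_or_ne x 0 with rfl | hx
  · norm_num
  · rw [Padic.norm_eq_zpow_neg_valuation hx] at h ⊢
    have h2 : ((2:ℕ):ℝ) = (2:ℝ) := by norm_num
    rw [h2] at h ⊢
    have : -x.valuation < 0 := by
      by_contra hc
      push_neg at hc
      have := one_le_zpow₀ (by norm_num : (1:ℝ) ≤ 2) hc
      linarith
    have hle : -x.valuation ≤ -1 := by omega
    calc (2:ℝ)^(-x.valuation) ≤ (2:ℝ)^(-1:ℤ) := by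
          apply zpow_le_zpow_right₀ (by norm_num) hle
      _ = 1/2 := by norm_num

lemma qdisc2 {x : ℚ_[2]} (h : 1 < ‖x‖) : 2 ≤ ‖x‖ := by
  have hx : x ≠ 0 := by rintro rfl; simp at h; linarith
  have hinv : ‖x⁻¹‖ < 1 := by
    rw [norm_inv]
    have : (0:ℝ) < ‖x‖ := by positivity
    rw [inv_lt_one_iff₀]; right; exact h
  have := qdisc hinv
  rw [norm_inv] at this
  have hpos : (0:ℝ) < ‖x‖ := by positivity
  have h2 : ‖x‖ * ‖x‖⁻¹ = 1 := mul_inv_cancel₀ (ne_of_gt hpos)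
  nlinarith

lemma qodd_sq {a : ℚ_[2]} (h : ‖a‖ = 1) : ‖a^2 - 1‖ ≤ 1/8 := by
  have ha1 : ‖a‖ ≤ 1 := le_of_eq h
  set A : ℤ_[2] := ⟨a, ha1⟩ with hA
  have hcoe : (A : ℚ_[2]) = a := rfl
  have : ((A^2 - 1 : ℤ_[2]) : ℚ_[2]) = a^2 - 1 := by push_cast [hcoe]; ring
  rw [← this, PadicInt.padic_norm_e_of_padicInt]
  exact Zodd_sq A (by rwa [PadicInt.norm_def, hcoe])

-- norm of 2 in ℚ₂
lemma qnorm2 : ‖(2:ℚ_[2])‖ = 1/2 := by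
  have := @Padic.norm_p 2 _
  rw [show ((2:ℕ):ℚ_[2]) = (2:ℚ_[2]) by norm_num] at this
  rw [this]; norm_num

lemma qnorm_odd (m : ℕ) (hm : m % 2 = 1) : ‖(m:ℚ_[2])‖ = 1 := by
  have h1 : ‖((m:ℤ):ℚ_[2])‖ ≤ 1 := Padic.norm_int_le_one m
  rcases lt_or_eq_of_le h1 with h | h
  · exfalso
    rw [Padic.norm_intCast_lt_one_iff] at h
    have : (2:ℤ) ∣ (m:ℤ) := by exact_mod_cast h
    omega
  · rw [← h]; norm_num

lemma qnorm_shift (j m : ℕ) (hm : m % 2 = 1) : ‖((2^j * m : ℕ) : ℚ_[2])‖ = (1/2)^j := by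
  push_cast
  rw [norm_mul, norm_pow, qnorm2, qnorm_odd m hm]
  ring

-- sum of two squares zero
lemma sqm1 (r : ℚ_[2]) : r^2 ≠ -1 := by
  intro h
  have h1 : ‖r‖^2 = 1 := by
    rw [← norm_pow, h]; simp
  have h2 : ‖r‖ = 1 := by nlinarith [norm_nonneg r]
  have := qodd_sq h2
  rw [h, show (-1:ℚ_[2]) - 1 = -2 by ring, norm_neg, qnorm2] at this
  norm_num at this

lemma sum_sq_zero {a b : ℚ_[2]} (h : a^2 + b^2 = 0) : a = 0 ∧ b = 0 := by
  by_cases hb : b = 0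
  · subst hb
    simp at h
    exact ⟨h, rfl⟩
  · exfalso
    apply sqm1 (a / b)
    field_simp
    linear_combination h

-- integrality : ‖a²+b²‖ ≤ 1 → both integral
lemma int_of_sum_sq {a b : ℚ_[2]} (h : ‖a^2 + b^2‖ ≤ 1) : ‖a‖ ≤ 1 ∧ ‖b‖ ≤ 1 := by
  -- key: if ‖a‖ = ‖b‖ > 1 or max > other, contradiction
  have key : ∀ x y : ℚ_[2], ‖y‖ ≤ ‖x‖ → 1 < ‖x‖ → ¬ (‖x^2 + y^2‖ ≤ 1) := by
    intro x y hyx hx hle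
    have hx0 : x ≠ 0 := by rintro rfl; simp at hx; linarith
    rcases lt_or_eq_of_le hyx with hlt | heq
    · -- dominance: ‖x²+y²‖ = ‖x‖²
      have h1 : ‖y^2‖ < ‖x^2‖ := by
        rw [norm_pow, norm_pow]
        have h0 : (0:ℝ) ≤ ‖y‖ := norm_nonneg y
        nlinarith
      have := Padic.add_eq_max_of_ne (q := y^2) (r := x^2) (ne_of_lt h1)
      rw [show y^2 + x^2 = x^2 + y^2 by ring, max_eq_right (le_of_lt h1)] at this
      rw [this, norm_pow] at hle
      nlinarith
    · -- equal norms > 1 : x²+y² = x²(1+(y/x)²), ‖1+u²‖ = 1/2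
      have hxpos : (0:ℝ) < ‖x‖ := lt_trans zero_lt_one hx
      have hu : ‖y/x‖ = 1 := by
        rw [norm_div, ← heq, div_self (by rw [heq]; exact ne_of_gt hxpos)]
      have h8 : ‖(y/x)^2 - 1‖ ≤ 1/8 := qodd_sq hu
      have hdom : ‖(1 + (y/x)^2)‖ = 1/2 := by
        have : (1:ℚ_[2]) + (y/x)^2 = ((y/x)^2 - 1) + 2 := by ring
        have hne : ‖(y/x)^2 - 1‖ ≠ ‖(2:ℚ_[2])‖ := by
          rw [qnorm2]; intro hc; rw [hc] at h8; norm_num at h8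
        rw [this, Padic.add_eq_max_of_ne hne]
        rw [max_eq_right (by rw [qnorm2]; linarith)]
        exact qnorm2
      have hx2 : x^2 + y^2 = x^2 * (1 + (y/x)^2) := by field_simp
      rw [hx2, norm_mul, hdom, norm_pow] at hle
      have := qdisc2 hx
      nlinarith
  constructor
  · by_contra hc; push_neg at hc
    rcases le_total ‖b‖ ‖a‖ with hba | hab
    · exact key a b hba hc h
    · exact key b a hab (lt_of_lt_of_le hc hab) (by rwa [add_comm])
  · by_contra hc; push_neg at hc
    rcases le_total ‖a‖ ‖b‖ with hab | hba
    · exact key b a hab hc (by rwa [add_comm])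
    · exact key a b hba (lt_of_lt_of_le hc hba) h

-- the two main 1/32 composite lemmas
lemma qusq1 {a b : ℚ_[2]} (ha : ‖a‖ = 1) (hb : ‖b‖ ≤ 1/2) :
    ‖(a^2 - b^2 - 1)^2 + 4*a^2*b^2‖ ≤ 1/32 := by
  have ha1 : ‖a‖ ≤ 1 := le_of_eq ha
  have hb1 : ‖b/2‖ ≤ 1 := by
    rw [norm_div, qnorm2]
    rw [div_le_one (by norm_num)] at *
    linarith
  set A : ℤ_[2] := ⟨a, ha1⟩ with hA
  set B : ℤ_[2] := ⟨b/2, hb1⟩ with hB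
  have hcA : (A : ℚ_[2]) = a := rfl
  have hcB : (B : ℚ_[2]) = b/2 := rfl
  have hexp : (((A^2 - 4*B^2 - 1)^2 + 16*A^2*B^2 : ℤ_[2]) : ℚ_[2])
      = (a^2 - b^2 - 1)^2 + 4*a^2*b^2 := by
    have h4 : ((4:ℤ_[2]):ℚ_[2]) = 4 := rfl
    have h16 : ((16:ℤ_[2]):ℚ_[2]) = 16 := rfl
    push_cast [hcA, hcB, h4, h16]; field_simp; ring
  rw [← hexp, PadicInt.padic_norm_e_of_padicInt]
  exact Zusq1 A B (by rwa [PadicInt.norm_def, hcA])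

lemma qusq2 {a b : ℚ_[2]} (ha : ‖a‖ ≤ 1/2) (hb : ‖b‖ = 1) :
    ‖(a^2 - b^2 + 1)^2 + 4*a^2*b^2‖ ≤ 1/32 := by
  have hb1 : ‖b‖ ≤ 1 := le_of_eq hb
  have ha1 : ‖a/2‖ ≤ 1 := by
    rw [norm_div, qnorm2]
    rw [div_le_one (by norm_num)] at *
    linarith
  set A : ℤ_[2] := ⟨a/2, ha1⟩ with hA
  set B : ℤ_[2] := ⟨b, hb1⟩ with hB
  have hcA : (A : ℚ_[2]) = a/2 := rfl
  have hcB : (B : ℚ_[2]) = b := rfl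
  have hexp : (((4*A^2 - B^2 + 1)^2 + 16*A^2*B^2 : ℤ_[2]) : ℚ_[2])
      = (a^2 - b^2 + 1)^2 + 4*a^2*b^2 := by
    have h4 : ((4:ℤ_[2]):ℚ_[2]) = 4 := rfl
    have h16 : ((16:ℤ_[2]):ℚ_[2]) = 16 := rfl
    push_cast [hcA, hcB, h4, h16]; field_simp; ring
  rw [← hexp, PadicInt.padic_norm_e_of_padicInt]
  exact Zusq2 A B (by rwa [PadicInt.norm_def, hcB])

lemma coords (L : Type*) [Field L] [Algebra ℚ_[2] L] (hdim : Module.finrank ℚ_[2] L = 2)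
    (α : L) (hα : α^2 = -1) :
    ∃ re im : L → ℚ_[2],
      (∀ x : L, x = algebraMap ℚ_[2] L (re x) + algebraMap ℚ_[2] L (im x) * α) ∧
      (∀ a c : ℚ_[2], re (algebraMap ℚ_[2] L a + algebraMap ℚ_[2] L c * α) = a ∧
        im (algebraMap ℚ_[2] L a + algebraMap ℚ_[2] L c * α) = c) := by
  set e := algebraMap ℚ_[2] L with he
  have hinj : Function.Injective e := (algebraMap ℚ_[2] L).injective
  have hα0 : α ≠ 0 := by
    intro h
    have := hα; rw [h] at this; norm_num at this
  have hli : LinearIndependent ℚ_[2] ![(1:L), α] := by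
    rw [linearIndependent_fin2]
    refine ⟨by simpa using hα0, ?_⟩
    intro a hc
    simp only [Matrix.cons_val_one, Matrix.head_cons, Matrix.cons_val_zero] at hc
    rw [Algebra.smul_def] at hc
    have h1 : e (a^2) * α^2 = 1 := by rw [map_pow, ← mul_pow, hc, one_pow]
    rw [hα] at h1
    have h2 : e (a^2) = -1 := by linear_combination -h1
    have h3 : a^2 = -1 := hinj (by rw [h2, map_neg, map_one])
    exact sqm1 a h3
  have hcard : Fintype.card (Fin 2) = Module.finrank ℚ_[2] L := by simp [hdim]
  let b : Module.Basis (Fin 2) ℚ_[2] L := basisOfLinearIndependentOfCardEqFinrank hli hcard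
  have hb : ⇑b = ![(1:L), α] := coe_basisOfLinearIndependentOfCardEqFinrank hli hcard
  have hb0 : b 0 = 1 := by rw [show b 0 = (⇑b) 0 from rfl, hb]; rfl
  have hb1 : b 1 = α := by rw [show b 1 = (⇑b) 1 from rfl, hb]; rfl
  refine ⟨fun x => b.repr x 0, fun x => b.repr x 1, ?_, ?_⟩
  · intro x
    have hs := b.sum_repr x
    rw [Fin.sum_univ_two, hb0, hb1, Algebra.smul_def, Algebra.smul_def, mul_one] at hs
    exact hs.symm
  · intro a c
    have hx : e a + e c * α = a • b 0 + c • b 1 := by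
      rw [hb0, hb1, Algebra.smul_def, Algebra.smul_def, mul_one]
    rw [hx]
    constructor <;> simp [map_add, map_smul, b.repr_self, Finsupp.single_apply]

set_option maxHeartbeats 16000000 in
theorem obstruct (p q : ℕ) (hpq : q = p + 2) (hp8 : p % 8 = 3)
    (L : Type*) [Field L] [Algebra ℚ_[2] L] (hdim : Module.finrank ℚ_[2] L = 2)
    (α : L) (hα : α ^ 2 = -1) :
    ¬ ∃ z w : L, α * w ^ 2 + 1 - ((p : L) + (q : L)) * z ^ 2 + z ^ 4 = 0 := by
  rintro ⟨z, w, heq⟩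
  obtain ⟨re, im, P1, P2⟩ := coords L hdim α hα
  set e := algebraMap ℚ_[2] L with he
  have hα0 : α ≠ 0 := by
    intro h
    have := hα; rw [h] at this; norm_num at this
  -- rewrite the natural casts
  rw [show ((p:L)) = e ((p:ℕ):ℚ_[2]) from (map_natCast e p).symm,
      show ((q:L)) = e ((q:ℕ):ℚ_[2]) from (map_natCast e q).symm, ← map_add] at heq
  set γ : ℚ_[2] := ((p:ℕ):ℚ_[2]) + ((q:ℕ):ℚ_[2]) with hγdef
  set V : L → ℝ := fun x => ‖re x ^ 2 + im x ^ 2‖ with hV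
  -- ============ basic coordinate facts ============
  have hre_e : ∀ a : ℚ_[2], re (e a) = a ∧ im (e a) = 0 := by
    intro a
    have h0 := P2 a 0
    rw [map_zero, zero_mul, add_zero] at h0
    exact h0
  have hmul : ∀ x y : L, x * y
      = e (re x * re y - im x * im y) + e (re x * im y + im x * re y) * α := by
    intro x y
    calc x * y = (e (re x) + e (im x) * α) * (e (re y) + e (im y) * α) := by
          rw [← P1 x, ← P1 y]
      _ = _ := by
          simp only [map_sub, map_add, map_mul]
          linear_combination (e (im x) * e (im y)) * hα
  have reim_mul : ∀ x y : L, re (x*y) = re x * re y - im x * im y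
      ∧ im (x*y) = re x * im y + im x * re y := by
    intro x y
    rw [hmul x y]
    exact P2 _ _
  have Vcoords : ∀ a c : ℚ_[2], V (e a + e c * α) = ‖a^2 + c^2‖ := by
    intro a c
    simp only [hV]
    rw [(P2 a c).1, (P2 a c).2]
  -- ============ V machinery ============
  have Vmul : ∀ x y : L, V (x*y) = V x * V y := by
    intro x y
    simp only [hV]
    rw [(reim_mul x y).1, (reim_mul x y).2, ← norm_mul]
    congr 1; ring
  have Ve : ∀ a : ℚ_[2], V (e a) = ‖a‖^2 := by
    intro a
    simp only [hV]
    rw [(hre_e a).1, (hre_e a).2, ← norm_pow]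
    congr 1; ring
  have V1 : V (1:L) = 1 := by
    have := Ve 1; rw [map_one] at this; rw [this]; simp
  have Vnonneg : ∀ x : L, 0 ≤ V x := fun x => norm_nonneg _
  have Vzero_iff : ∀ x : L, V x = 0 ↔ x = 0 := by
    intro x
    constructor
    · intro h
      simp only [hV] at h
      rw [norm_eq_zero] at h
      obtain ⟨h1, h2⟩ := sum_sq_zero h
      have h3 := P1 x
      rw [h1, h2] at h3
      simpa using h3
    · rintro rfl
      have h0 : (0:L) = e 0 := by rw [map_zero]
      rw [h0, Ve]; simp
  have Vneg : ∀ x : L, V (-x) = V x := by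
    intro x
    have h1 : -x = e (-1) * x := by rw [map_neg, map_one]; ring
    rw [h1, Vmul, Ve]
    simp
  have Vsq : ∀ x : L, V (x^2) = (V x)^2 := by
    intro x; rw [pow_two, Vmul, pow_two]
  have Vsmall : ∀ t : L, V t ≤ 1 → V (1 + t) ≤ 1 := by
    intro t ht
    have hint := int_of_sum_sq (a := re t) (b := im t) (by simpa [hV] using ht)
    have h1 : (1:L) + t = e (1 + re t) + e (0 + im t) * α := by
      conv_lhs => rw [P1 t]
      rw [map_add, map_add, map_one, map_zero]; ring
    rw [h1, Vcoords]
    have hb1 : ‖(1 + re t)‖ ≤ 1 := le_trans (Padic.nonarchimedean _ _)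
      (max_le (by simp) hint.1)
    have hb2 : ‖(0 + im t)‖ ≤ 1 := by rw [zero_add]; exact hint.2
    calc ‖(1 + re t)^2 + (0 + im t)^2‖ ≤ max ‖(1 + re t)^2‖ ‖(0 + im t)^2‖ :=
          Padic.nonarchimedean _ _
      _ ≤ 1 := by
          apply max_le <;> rw [norm_pow] <;> nlinarith [norm_nonneg (1 + re t), norm_nonneg (0 + im t)]
  have Vadd : ∀ x y : L, V (x + y) ≤ max (V x) (V y) := by
    have key : ∀ x y : L, y ≠ 0 → V x ≤ V y → V (x + y) ≤ V y := by
      intro x y hy hxy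
      have hy0 : V y ≠ 0 := fun h => hy ((Vzero_iff y).mp h)
      have hypos : 0 < V y := lt_of_le_of_ne (Vnonneg y) (Ne.symm hy0)
      have hxy2 : x + y = y * (1 + x * y⁻¹) := by
        field_simp
        try ring
      have ht : V (x * y⁻¹) ≤ 1 := by
        have h1 : V (x * y⁻¹) * V y = V x := by
          rw [← Vmul]
          congr 1
          field_simp
        nlinarith
      rw [hxy2, Vmul]
      nlinarith [Vsmall (x * y⁻¹) ht, Vnonneg (1 + x * y⁻¹)]
    intro x y
    rcases eq_or_ne y 0 with rfl | hy
    · rw [add_zero]; exact le_max_left _ _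
    rcases eq_or_ne x 0 with rfl | hx
    · rw [zero_add]; exact le_max_right _ _
    rcases le_total (V x) (V y) with h | h
    · exact le_trans (key x y hy h) (le_max_right _ _)
    · rw [add_comm]
      exact le_trans (key y x hx h) (le_max_left _ _)
  have Vdom : ∀ x y : L, V x < V y → V (x + y) = V y := by
    intro x y h
    have h1 : V (x+y) ≤ V y := le_trans (Vadd x y) (by rw [max_eq_right (le_of_lt h)])
    rcases lt_or_eq_of_le h1 with h2 | h2
    · exfalso
      have h3 : V y = V ((x+y) + (-x)) := by congr 1; ring
      have h4 : V ((x+y) + (-x)) ≤ max (V (x+y)) (V (-x)) := Vadd _ _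
      rw [Vneg x] at h4
      have h5 : max (V (x+y)) (V x) < V y := max_lt h2 h
      linarith [h3 ▸ h4]
    · exact h2
  have VB : ∀ (x y : L) (cb : ℝ), V x ≤ cb → V y ≤ cb → V (x+y) ≤ cb :=
    fun x y cb h1 h2 => le_trans (Vadd x y) (max_le h1 h2)
  -- ============ numerals ============
  have hL2 : (2:L) = e 2 := (map_ofNat e 2).symm
  have hL4 : (4:L) = e 4 := (map_ofNat e 4).symm
  have hL8 : (8:L) = e 8 := (map_ofNat e 8).symm
  have hL16 : (16:L) = e 16 := (map_ofNat e 16).symm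
  have hq4 : ‖(4:ℚ_[2])‖ = 1/4 := by
    rw [show (4:ℚ_[2]) = 2^2 by norm_num, norm_pow, qnorm2]; norm_num
  have hq8 : ‖(8:ℚ_[2])‖ = 1/8 := by
    rw [show (8:ℚ_[2]) = 2^3 by norm_num, norm_pow, qnorm2]; norm_num
  have hq16 : ‖(16:ℚ_[2])‖ = 1/16 := by
    rw [show (16:ℚ_[2]) = 2^4 by norm_num, norm_pow, qnorm2]; norm_num
  have hq4i : ‖(4⁻¹:ℚ_[2])‖ = 4 := by
    rw [norm_inv, hq4]; norm_num
  have VL2 : V (2:L) = 1/4 := by rw [hL2, Ve, qnorm2]; norm_num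
  have VL4 : V (4:L) = 1/16 := by rw [hL4, Ve, hq4]; norm_num
  have VL8 : V (8:L) = 1/64 := by rw [hL8, Ve, hq8]; norm_num
  have VL16 : V (16:L) = 1/256 := by rw [hL16, Ve, hq16]; norm_num
  have Vα : V α = 1 := by
    have h1 : α = e 0 + e 1 * α := by rw [map_zero, map_one]; ring
    rw [h1, Vcoords]
    norm_num
  have hV1α : V (1 + α) = 1/2 := by
    have h1 : (1:L) + α = e 1 + e 1 * α := by rw [map_one]; ring
    rw [h1, Vcoords, show ((1:ℚ_[2])^2 + 1^2) = 2 by norm_num, qnorm2]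
  have hVαm1 : V (α - 1) = 1/2 := by
    have h1 : α - 1 = e (-1) + e 1 * α := by simp only [map_neg, map_one]; ring
    rw [h1, Vcoords, show (((-1):ℚ_[2])^2 + 1^2) = 2 by norm_num, qnorm2]
  have hVα1 : V (α + 1) = 1/2 := by
    have h1 : α + 1 = e 1 + e 1 * α := by rw [map_one]; ring
    rw [h1, Vcoords, show ((1:ℚ_[2])^2 + 1^2) = 2 by norm_num, qnorm2]
  -- ============ unit squares ============
  have usq : ∀ x : L, V x = 1 → V (x^2 - 1) ≤ 1/32 ∨ V (x^2 + 1) ≤ 1/32 := by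
    intro x hx
    have hab : ‖re x^2 + im x^2‖ = 1 := by simpa [hV] using hx
    have hint := int_of_sum_sq (le_of_eq hab)
    have hsqm : x^2 - 1 = e (re x * re x - im x * im x + (-1))
        + e (re x * im x + im x * re x) * α := by
      rw [pow_two]
      conv_lhs => rw [hmul x x]
      simp only [map_add, map_neg, map_one]; ring
    have hsqp : x^2 + 1 = e (re x * re x - im x * im x + 1)
        + e (re x * im x + im x * re x) * α := by
      rw [pow_two]
      conv_lhs => rw [hmul x x]
      simp only [map_add, map_one]; ring
    rcases lt_or_eq_of_le hint.1 with ha | ha <;> rcases lt_or_eq_of_le hint.2 with hb | hb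
    · -- both small : contradiction with norm 1
      exfalso
      have h1 : ‖re x^2 + im x^2‖ ≤ 1/4 := by
        apply le_trans (Padic.nonarchimedean _ _)
        have := qdisc ha; have := qdisc hb
        apply max_le <;> rw [norm_pow] <;> nlinarith [norm_nonneg (re x), norm_nonneg (im x)]
      rw [hab] at h1; norm_num at h1
    · -- re small, im unit : x²+1 small
      right
      rw [hsqp, Vcoords]
      have := qusq2 (qdisc ha) hb
      calc ‖(re x * re x - im x * im x + 1)^2 + (re x * im x + im x * re x)^2‖
          = ‖(re x^2 - im x^2 + 1)^2 + 4*(re x)^2*(im x)^2‖ := by congr 1; ring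
        _ ≤ 1/32 := this
    · -- re unit, im small : x²-1 small
      left
      rw [hsqm, Vcoords]
      have := qusq1 ha (qdisc hb)
      calc ‖(re x * re x - im x * im x + (-1))^2 + (re x * im x + im x * re x)^2‖
          = ‖(re x^2 - im x^2 - 1)^2 + 4*(re x)^2*(im x)^2‖ := by congr 1; ring
        _ ≤ 1/32 := this
    · -- both units : contradiction
      exfalso
      have h8a : ‖re x^2 - 1‖ ≤ 1/8 := qodd_sq ha
      have h8b : ‖im x^2 - 1‖ ≤ 1/8 := qodd_sq hb
      have hsum : ‖(re x^2 - 1) + (im x^2 - 1)‖ ≤ 1/8 :=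
        le_trans (Padic.nonarchimedean _ _) (max_le h8a h8b)
      have hne : ‖(re x^2 - 1) + (im x^2 - 1)‖ ≠ ‖(2:ℚ_[2])‖ := by
        rw [qnorm2]; intro hc; rw [hc] at hsum; norm_num at hsum
      have hrw : re x^2 + im x^2 = ((re x^2 - 1) + (im x^2 - 1)) + 2 := by ring
      rw [hrw, Padic.add_eq_max_of_ne hne] at hab
      have : max ‖(re x^2 - 1) + (im x^2 - 1)‖ ‖(2:ℚ_[2])‖ ≤ 1/2 :=
        max_le (by linarith) (le_of_eq qnorm2)
      rw [hab] at this; norm_num at this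

  -- ============ gamma norm facts ============
  obtain ⟨k, hk⟩ : ∃ k, p = 8*k+3 := ⟨p/8, by omega⟩
  have hγval : γ = ((2^3*(2*k+1) : ℕ) : ℚ_[2]) := by
    rw [hγdef, hpq, hk]; push_cast; ring
  have hγ : ‖γ‖ = 1/8 := by
    rw [hγval, qnorm_shift 3 _ (by omega)]; norm_num
  have h2γ : ‖2 - γ‖ = 1/2 := by
    have h : (2:ℚ_[2]) - γ = -(((2^1*(8*k+3) : ℕ) : ℚ_[2])) := by
      rw [hγval]; push_cast; ring
    rw [h, norm_neg, qnorm_shift 1 _ (by omega)]; norm_num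
  have h4γ : ‖4 - γ‖ = 1/4 := by
    have h : (4:ℚ_[2]) - γ = -(((2^2*(4*k+1) : ℕ) : ℚ_[2])) := by
      rw [hγval]; push_cast; ring
    rw [h, norm_neg, qnorm_shift 2 _ (by omega)]; norm_num
  have hγ2 : ‖2 + γ‖ = 1/2 := by
    have h : (2:ℚ_[2]) + γ = ((2^1*(8*k+5) : ℕ) : ℚ_[2]) := by
      rw [hγval]; push_cast; ring
    rw [h, qnorm_shift 1 _ (by omega)]; norm_num
  have hγ4 : ‖4 + γ‖ = 1/4 := by
    have h : (4:ℚ_[2]) + γ = ((2^2*(4*k+3) : ℕ) : ℚ_[2]) := by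
      rw [hγval]; push_cast; ring
    rw [h, qnorm_shift 2 _ (by omega)]; norm_num
  -- ============ small case ============
  have smallcase : ∀ z w : L, V z ≤ 1/2 → α*w^2 + 1 - e γ*z^2 + z^4 = 0 → False := by
    intro z w hz hzeq
    have hw2 : w^2 = α * (z^4 - e γ * z^2 + 1) := by
      linear_combination (-α) * hzeq + (w^2) * hα
    have hVz4 : V (z^4) ≤ 1/16 := by
      rw [show z^4 = (z^2)^2 by ring, Vsq, Vsq]
      have h0 : V z^2 ≤ 1/4 := by nlinarith [Vnonneg z]
      nlinarith [sq_nonneg (V z), Vnonneg z]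
    have hVγz : V (-(e γ * z^2)) ≤ 1/16 := by
      rw [Vneg, Vmul, Ve, hγ, Vsq]
      nlinarith [Vnonneg z]
    have hR : V (z^4 - e γ * z^2) ≤ 1/16 := by
      rw [sub_eq_add_neg]
      exact VB _ _ _ hVz4 hVγz
    have hwsq : w^2 - α = α * (z^4 - e γ*z^2) := by linear_combination hw2
    have hVwsmall : V (w^2 - α) ≤ 1/16 := by
      rw [hwsq, Vmul, Vα, one_mul]; exact hR
    have hVw2 : V (w^2) = 1 := by
      rw [show w^2 = (w^2 - α) + α by ring, Vdom _ _ (by rw [Vα]; linarith), Vα]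
    have hVw : V w = 1 := by
      have h := Vsq w
      rw [hVw2] at h
      nlinarith [Vnonneg w]
    rcases usq w hVw with h | h
    · have hd : V (w^2 - 1) = 1/2 := by
        rw [show w^2 - 1 = (w^2 - α) + (α - 1) by ring,
          Vdom _ _ (by rw [hVαm1]; linarith), hVαm1]
      rw [hd] at h; norm_num at h
    · have hd : V (w^2 + 1) = 1/2 := by
        rw [show w^2 + 1 = (w^2 - α) + (α + 1) by ring,
          Vdom _ _ (by rw [hVα1]; linarith), hVα1]
      rw [hd] at h; norm_num at h
  -- ============ endgame ============
  have endgame : ∀ (g : ℚ_[2]) (R : L), ‖g‖ = 1/2 → V R ≤ 1/128 →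
      1/128 < ‖g - 2‖^2 → 1/128 < ‖g + 2‖^2 → w^2 = α * (e g + R) → False := by
    intro g R hg hR hgm hgp hw2'
    have hVf : V (e g + R) = 1/4 := by
      rw [add_comm, Vdom _ _ (by rw [Ve, hg]; nlinarith), Ve, hg]
      norm_num
    have hVw2 : V (w^2) = 1/4 := by rw [hw2', Vmul, Vα, one_mul, hVf]
    have hVw : V w = 1/2 := by
      have h := Vsq w
      rw [hVw2] at h
      nlinarith [Vnonneg w]
    set u : L := e 2⁻¹ * (1 - α) * w with hu
    have h2inv : e (2⁻¹ : ℚ_[2]) * 2 = 1 := by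
      rw [hL2, ← map_mul, show ((2:ℚ_[2])⁻¹*2 : ℚ_[2]) = 1 by norm_num, map_one]
    have hwu : w = (1+α) * u := by
      rw [hu]
      linear_combination (e (2⁻¹:ℚ_[2]) * w) * hα - w * h2inv
    have hVu : V u = 1 := by
      have h := hVw
      rw [hwu, Vmul, hV1α] at h
      linarith
    have hfu : e g + R = 2 * u^2 := by
      have ha2 : w^2 = 2*α*u^2 := by
        rw [hwu]; linear_combination (u^2) * hα
      apply mul_left_cancel₀ hα0
      rw [← hw2', ha2]; ring
    rcases usq u hVu with h | h
    · have h1 : e (g - 2) + R = 2*(u^2-1) := by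
        have hg2 : e (g-2) = e g - 2 := by rw [map_sub, ← hL2]
        rw [hg2]; linear_combination hfu
      have hV1' : V (e (g-2) + R) = ‖g-2‖^2 := by
        rw [add_comm, Vdom _ _ (by rw [Ve]; linarith), Ve]
      have hV2' : V (2*(u^2-1)) ≤ 1/128 := by
        rw [Vmul, VL2]
        nlinarith [Vnonneg (u^2-1)]
      rw [h1] at hV1'
      linarith [hV1' ▸ hV2']
    · have h1 : e (g + 2) + R = 2*(u^2+1) := by
        have hg2 : e (g+2) = e g + 2 := by rw [map_add, ← hL2]
        rw [hg2]; linear_combination hfu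
      have hV1' : V (e (g+2) + R) = ‖g+2‖^2 := by
        rw [add_comm, Vdom _ _ (by rw [Ve]; linarith), Ve]
      have hV2' : V (2*(u^2+1)) ≤ 1/128 := by
        rw [Vmul, VL2]
        nlinarith [Vnonneg (u^2+1)]
      rw [h1] at hV1'
      linarith [hV1' ▸ hV2']
  -- ============ main case split ============
  rcases lt_trichotomy (V z) 1 with h | h | h
  · exact smallcase z w (qdisc h) heq
  · -- V z = 1
    have hw2 : w^2 = α * (z^4 - e γ * z^2 + 1) := by
      linear_combination (-α) * heq + (w^2) * hα
    have h44 : (4:L) * e (4⁻¹:ℚ_[2]) = 1 := by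
      rw [hL4, ← map_mul, show ((4:ℚ_[2])*4⁻¹ : ℚ_[2]) = 1 by norm_num, map_one]
    rcases usq z h with hz1 | hz1
    · -- z² ≡ 1
      set δ : L := e (4⁻¹:ℚ_[2]) * (z^2 - 1) with hδ
      have hz2 : z^2 = 1 + 4*δ := by
        rw [hδ]; linear_combination (1 - z^2) * h44
      have hVδ : V δ ≤ 1/2 := by
        rw [hδ, Vmul, Ve, hq4i]
        nlinarith
      have hfR : z^4 - e γ*z^2 + 1 = e (2-γ) + (8*δ + 16*δ^2 - 4*(e γ)*δ) := by
        have hz4 : z^4 = (1 + 4*δ)^2 := by rw [← hz2]; ring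
        have hg2 : e (2-γ) = 2 - e γ := by rw [map_sub, ← hL2]
        rw [hz4, hz2, hg2]; ring
      have hVR : V (8*δ + 16*δ^2 - 4*(e γ)*δ) ≤ 1/128 := by
        rw [sub_eq_add_neg]
        apply VB _ _ _ (VB _ _ _ ?_ ?_) ?_
        · rw [Vmul, VL8]; linarith
        · rw [Vmul, VL16, Vsq]; nlinarith [hVδ, Vnonneg δ]
        · rw [Vneg, Vmul, Vmul, VL4, Ve, hγ]; nlinarith
      apply endgame (2-γ) _ h2γ hVR ?_ ?_ (by rw [← hfR]; exact hw2)
      · rw [show (2-γ) - 2 = -γ by ring, norm_neg, hγ]; norm_num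
      · rw [show (2-γ) + 2 = 4 - γ by ring, h4γ]; norm_num
    · -- z² ≡ -1
      set δ : L := e (4⁻¹:ℚ_[2]) * (z^2 + 1) with hδ
      have hz2 : z^2 = -1 + 4*δ := by
        rw [hδ]; linear_combination (-(z^2) - 1) * h44
      have hVδ : V δ ≤ 1/2 := by
        rw [hδ, Vmul, Ve, hq4i]
        nlinarith
      have hfR : z^4 - e γ*z^2 + 1 = e (2+γ) + (-(8*δ) + 16*δ^2 - 4*(e γ)*δ) := by
        have hz4 : z^4 = (-1 + 4*δ)^2 := by rw [← hz2]; ring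
        have hg2 : e (2+γ) = 2 + e γ := by rw [map_add, ← hL2]
        rw [hz4, hz2, hg2]; ring
      have hVR : V (-(8*δ) + 16*δ^2 - 4*(e γ)*δ) ≤ 1/128 := by
        rw [sub_eq_add_neg]
        apply VB _ _ _ (VB _ _ _ ?_ ?_) ?_
        · rw [Vneg, Vmul, VL8]; linarith
        · rw [Vmul, VL16, Vsq]; nlinarith [hVδ, Vnonneg δ]
        · rw [Vneg, Vmul, Vmul, VL4, Ve, hγ]; nlinarith
      apply endgame (2+γ) _ hγ2 hVR ?_ ?_ (by rw [← hfR]; exact hw2)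
      · rw [show (2+γ) - 2 = γ by ring, hγ]; norm_num
      · rw [show (2+γ) + 2 = 4 + γ by ring, hγ4]; norm_num
  · -- V z > 1
    have hz0 : z ≠ 0 := by
      intro h0
      rw [h0] at h
      rw [(Vzero_iff 0).mpr rfl] at h
      linarith
    have hzz : z * z⁻¹ = 1 := mul_inv_cancel₀ hz0
    have hVzinv : V z⁻¹ ≤ 1/2 := by
      have h1 : V z * V z⁻¹ = 1 := by rw [← Vmul, hzz, V1]
      have h2 : V z⁻¹ < 1 := by nlinarith [Vnonneg z⁻¹]
      exact qdisc h2
    apply smallcase z⁻¹ (w * (z⁻¹)^2) hVzinv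
    have hexp : α * (w * (z⁻¹)^2)^2 + 1 - e γ * (z⁻¹)^2 + (z⁻¹)^4 =
        (z⁻¹)^4 * (α * w^2 + 1 - e γ * z^2 + z^4)
        + (1 - (z*z⁻¹)^4) - e γ * (z⁻¹)^2 * (1 - (z*z⁻¹)^2) := by
      ring
    rw [hexp, heq, hzz]
    ring


lemma znorm8 : ‖(8:ℤ_[2])‖ = 1/8 := by
  rw [PadicInt.norm_def, show ((8:ℤ_[2]):ℚ_[2]) = 8 from rfl,
    show (8:ℚ_[2]) = 2^3 by norm_num, norm_pow, qnorm2]; norm_num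

lemma znorm2 : ‖(2:ℤ_[2])‖ = 1/2 := by
  rw [PadicInt.norm_def, show ((2:ℤ_[2]):ℚ_[2]) = 2 from rfl, qnorm2]

-- construction for p % 8 = 7
set_option maxHeartbeats 1000000 in
theorem construct (p q : ℕ) (hpq : q = p + 2) (hp8 : p % 8 = 7)
    (L : Type*) [Field L] [Algebra ℚ_[2] L]
    (α : L) (hα : α ^ 2 = -1) :
    ∃ z w : L, α * w ^ 2 + 1 - ((p : L) + (q : L)) * z ^ 2 + z ^ 4 = 0 := by
  set e := algebraMap ℚ_[2] L with he
  -- get a square root of q in ℤ_[2]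
  obtain ⟨s, hs⟩ : ∃ s : ℤ_[2], s^2 = (q:ℤ_[2]) := by
    have hq1 : ∃ t, q = 8*t + 1 := ⟨(p+2)/8, by omega⟩
    obtain ⟨t, ht⟩ := hq1
    have hF := @hensels_lemma 2 _ ℤ_[2] _ _ (Polynomial.X^2 - Polynomial.C (q:ℤ_[2])) 1 ?_
    · obtain ⟨s, hs, _⟩ := hF
      refine ⟨s, ?_⟩
      have := hs
      simp [Polynomial.eval_sub, Polynomial.eval_pow] at this
      linear_combination this
    · -- norm condition
      have h1 : Polynomial.aeval (1:ℤ_[2]) (Polynomial.X^2 - Polynomial.C (q:ℤ_[2])) = 1 - (q:ℤ_[2]) := by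
        simp
      have h2 : Polynomial.aeval (1:ℤ_[2]) (Polynomial.derivative (Polynomial.X^2 - Polynomial.C (q:ℤ_[2]))) = 2 := by
        simp; norm_num
      rw [h1, h2]
      have hnq : ‖(1:ℤ_[2]) - (q:ℤ_[2])‖ ≤ 1/8 := by
        have hv : (1:ℤ_[2]) - (q:ℤ_[2]) = -(8*(t:ℤ_[2])) := by
          rw [ht]; push_cast; ring
        rw [hv, norm_neg]
        calc ‖(8:ℤ_[2])*(t:ℤ_[2])‖ = ‖(8:ℤ_[2])‖ * ‖(t:ℤ_[2])‖ := norm_mul _ _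
          _ ≤ (1/8) * 1 := by
              apply mul_le_mul (le_of_eq znorm8) (PadicInt.norm_le_one _) (norm_nonneg _) (by norm_num)
          _ = 1/8 := by norm_num
      rw [znorm2]
      calc ‖(1:ℤ_[2]) - (q:ℤ_[2])‖ ≤ 1/8 := hnq
        _ < (1/2)^2 := by norm_num
  refine ⟨α, (1+α) * e ((s:ℚ_[2])), ?_⟩
  have hq : ((q:ℕ):L) = (p:L) + 2 := by rw [hpq]; push_cast; ring
  have hes : (e ((s:ℚ_[2])))^2 = (q:L) := by
    rw [← map_pow]
    have h1 : ((s:ℚ_[2]))^2 = ((q:ℕ):ℚ_[2]) := by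
      have := congrArg (fun x : ℤ_[2] => (x : ℚ_[2])) hs
      push_cast at this
      exact this
    rw [h1, map_natCast]
  have hsq : ((1+α) * e ((s:ℚ_[2])))^2 = 2*α*(q:L) := by
    rw [mul_pow, hes]
    linear_combination (q:L) * hα
  rw [hsq, hq]
  linear_combination (α^2 + 1) * hα

/-- Let `p` and `q` be primes with `q = p + 2` and `p ≡ 3 (mod 4)`. Let `L` be a field
which is a `ℚ₂`-algebra of dimension 2 over `ℚ₂`, and `α ∈ L` with `α² = -1`. Then there
exist `z, w ∈ L` with `α·w² + 1 - (p+q)z² + z⁴ = 0` if and only if `p ≡ 7 (mod 8)`. -/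
theorem stmt_16 (p q : ℕ) (hp : p.Prime) (hq : q.Prime) (hpq : q = p + 2)
    (hp3 : p % 4 = 3)
    (L : Type*) [Field L] [Algebra ℚ_[2] L] (hdim : Module.finrank ℚ_[2] L = 2)
    (α : L) (hα : α ^ 2 = -1) :
    (∃ z w : L, α * w ^ 2 + 1 - ((p : L) + (q : L)) * z ^ 2 + z ^ 4 = 0) ↔
      p % 8 = 7 := by
  constructor
  · intro hex
    by_contra hne
    have hp83 : p % 8 = 3 := by omega
    exact obstruct p q hpq hp83 L hdim α hα hex
  · intro h7
    exact construct p q hpq h7 L α hα
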